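/- Let p be a prime. In the polynomial ring A = ℚ[x_1, x_2, x_3, …] (a polynomial variable x_n for each integer n ≥ 1), form the power series X(t) = 1 + Σ_{n≥1} x_n t^n ∈ A[[t]]. Let C ∈ A[[t]] be the unique power series with zero constant term such that X = exp(C) (it exists since X has constant term 1), and set c_n = n·(coefficient of t^n in C) for n ≥ 1. Let U and V be the p-singular and p-regular parts of X, and Y(t) = V(t)·U(t)^{-1} = Σ_{n≥0} y_n t^n. Then the ℚ-subalgebra of A generated by {y_n : n ≥ 1, p ∤ n} equals the ℚ-subalgebra of A generated by {c_n : n ≥ 1, p ∤ n}. -/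

import Mathlib

open PowerSeries

/-- The `p`-singular part of a power series `F = Σ fₙ tⁿ`, namely `Σ_{p ∣ n} fₙ tⁿ`. -/
noncomputable def pSingularPart {R : Type*} [CommRing R] (p : ℕ) (F : PowerSeries R) :
    PowerSeries R :=
  PowerSeries.mk fun n => if p ∣ n then PowerSeries.coeff (R := R) n F else 0

/-- The `p`-regular part of a power series `F = Σ fₙ tⁿ`, namely `Σ_{p ∤ n} fₙ tⁿ`. -/
noncomputable def pRegularPart {R : Type*} [CommRing R] (p : ℕ) (F : PowerSeries R) :
    PowerSeries R :=
  PowerSeries.mk fun n => if p ∣ n then 0 else PowerSeries.coeff (R := R) n F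

/-- `exp C = Σ_{k≥0} Cᵏ/k!` for a power series `C` with zero constant term over a
commutative `ℚ`-algebra.  (When the constant term of `C` is zero, `coeff n (C ^ k) = 0`
for `k > n`, so the truncated sum below computes the full exponential.) -/
noncomputable def psExp {R : Type*} [CommRing R] [Algebra ℚ R] (C : PowerSeries R) :
    PowerSeries R :=
  PowerSeries.mk fun n => ∑ k ∈ Finset.range (n + 1),
    ((k.factorial : ℚ)⁻¹) • PowerSeries.coeff (R := R) n (C ^ k)

section Helpers

variable {R : Type*} [CommRing R]

theorem coeff_pSing (p n : ℕ) (F : PowerSeries R) :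
    coeff (R := R) n (pSingularPart p F) = if p ∣ n then coeff (R := R) n F else 0 := coeff_mk _ _

theorem coeff_pReg (p n : ℕ) (F : PowerSeries R) :
    coeff (R := R) n (pRegularPart p F) = if p ∣ n then 0 else coeff (R := R) n F := coeff_mk _ _

theorem pReg_add_pSing (p : ℕ) (F : PowerSeries R) :
    pRegularPart p F + pSingularPart p F = F := by
  ext n
  simp only [map_add, coeff_pSing, coeff_pReg]
  split <;> simp

theorem coeff_pow_eq_zero {F : PowerSeries R} (hF : constantCoeff (R := R) F = 0)
    {n k : ℕ} (h : n < k) : coeff (R := R) n (F ^ k) = 0 := by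
  have hd : (X : PowerSeries R) ^ k ∣ F ^ k := pow_dvd_pow_of_dvd (X_dvd_iff.2 hF) k
  exact X_pow_dvd_iff.1 hd n h

theorem psupp_mul {p : ℕ} {F G : PowerSeries R}
    (hF : ∀ n, ¬ p ∣ n → coeff (R := R) n F = 0) (hG : ∀ n, ¬ p ∣ n → coeff (R := R) n G = 0) :
    ∀ n, ¬ p ∣ n → coeff (R := R) n (F * G) = 0 := by
  intro n hn
  rw [PowerSeries.coeff_mul]
  refine Finset.sum_eq_zero fun ab hab => ?_
  rw [Finset.HasAntidiagonal.mem_antidiagonal] at hab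
  by_cases h1 : p ∣ ab.1
  · have h2 : ¬ p ∣ ab.2 := fun h => hn (hab ▸ dvd_add h1 h)
    rw [hG _ h2, mul_zero]
  · rw [hF _ h1, zero_mul]

theorem psupp_pow {p : ℕ} {F : PowerSeries R}
    (hF : ∀ n, ¬ p ∣ n → coeff (R := R) n F = 0) (k : ℕ) :
    ∀ n, ¬ p ∣ n → coeff (R := R) n (F ^ k) = 0 := by
  induction k with
  | zero =>
    intro n hn
    have hn0 : n ≠ 0 := fun h => hn (h ▸ dvd_zero p)
    simp [coeff_one, hn0]
  | succ k ih =>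
    rw [pow_succ]
    exact psupp_mul ih hF

theorem pReg_mul_psupp {p : ℕ} {E S : PowerSeries R}
    (hS : ∀ n, ¬ p ∣ n → coeff (R := R) n S = 0) :
    pRegularPart p (E * S) = pRegularPart p E * S := by
  ext n
  rw [PowerSeries.coeff_mul n (pRegularPart p E) S, coeff_pReg p n]
  have hterm : ∀ ab : ℕ × ℕ, ab ∈ Finset.HasAntidiagonal.antidiagonal n →
      coeff (R := R) ab.1 (pRegularPart p E) * coeff (R := R) ab.2 S
      = if p ∣ ab.1 then 0 else coeff (R := R) ab.1 E * coeff (R := R) ab.2 S := by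
    intro ab _
    rw [coeff_pReg]
    split
    · rw [zero_mul]
    · rfl
  rw [Finset.sum_congr rfl hterm]
  by_cases hn : p ∣ n
  · rw [if_pos hn]
    refine (Finset.sum_eq_zero fun ab hab => ?_).symm
    rw [Finset.HasAntidiagonal.mem_antidiagonal] at hab
    by_cases h1 : p ∣ ab.1
    · rw [if_pos h1]
    · have h2 : ¬ p ∣ ab.2 := by
        intro h
        exact h1 (by
          have hd := Nat.dvd_sub hn h
          rwa [show n - ab.2 = ab.1 by omega] at hd)
      rw [if_neg h1, hS _ h2, mul_zero]
  · rw [if_neg hn, PowerSeries.coeff_mul n E S]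
    refine Finset.sum_congr rfl fun ab hab => ?_
    rw [Finset.HasAntidiagonal.mem_antidiagonal] at hab
    by_cases h1 : p ∣ ab.1
    · have h2 : ¬ p ∣ ab.2 := fun h => hn (hab ▸ dvd_add h1 h)
      rw [if_pos h1, hS _ h2, mul_zero]
    · rw [if_neg h1]

theorem pSing_mul_psupp {p : ℕ} {E S : PowerSeries R}
    (hS : ∀ n, ¬ p ∣ n → coeff (R := R) n S = 0) :
    pSingularPart p (E * S) = pSingularPart p E * S := by
  ext n
  rw [PowerSeries.coeff_mul n (pSingularPart p E) S, coeff_pSing p n]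
  have hterm : ∀ ab : ℕ × ℕ, ab ∈ Finset.HasAntidiagonal.antidiagonal n →
      coeff (R := R) ab.1 (pSingularPart p E) * coeff (R := R) ab.2 S
      = if p ∣ ab.1 then coeff (R := R) ab.1 E * coeff (R := R) ab.2 S else 0 := by
    intro ab _
    rw [coeff_pSing]
    split
    · rfl
    · rw [zero_mul]
  rw [Finset.sum_congr rfl hterm]
  by_cases hn : p ∣ n
  · rw [if_pos hn, PowerSeries.coeff_mul n E S]
    refine Finset.sum_congr rfl fun ab hab => ?_
    rw [Finset.HasAntidiagonal.mem_antidiagonal] at hab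
    by_cases h1 : p ∣ ab.1
    · rw [if_pos h1]
    · have h2 : ¬ p ∣ ab.2 := by
        intro h
        exact h1 (by
          have hd := Nat.dvd_sub hn h
          rwa [show n - ab.2 = ab.1 by omega] at hd)
      rw [if_neg h1, hS _ h2, mul_zero]
  · rw [if_neg hn]
    refine (Finset.sum_eq_zero fun ab hab => ?_).symm
    rw [Finset.HasAntidiagonal.mem_antidiagonal] at hab
    by_cases h1 : p ∣ ab.1
    · have h2 : ¬ p ∣ ab.2 := fun h => hn (hab ▸ dvd_add h1 h)
      rw [if_pos h1, hS _ h2, mul_zero]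
    · rw [if_neg h1]

end Helpers

section ExpHelpers

variable {R : Type*} [CommRing R] [Algebra ℚ R]

theorem coeff_psExp (n : ℕ) (C : PowerSeries R) :
    coeff (R := R) n (psExp C) = ∑ k ∈ Finset.range (n + 1),
      ((k.factorial : ℚ)⁻¹) • coeff (R := R) n (C ^ k) := coeff_mk _ _

theorem constantCoeff_psExp (C : PowerSeries R) : constantCoeff (R := R) (psExp C) = 1 := by
  have h := coeff_psExp 0 C
  rw [coeff_zero_eq_constantCoeff] at h
  simpa using h

theorem psupp_psExp {p : ℕ} {C : PowerSeries R}
    (hC : ∀ n, ¬ p ∣ n → coeff (R := R) n C = 0) :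
    ∀ n, ¬ p ∣ n → coeff (R := R) n (psExp C) = 0 := by
  intro n hn
  rw [coeff_psExp]
  exact Finset.sum_eq_zero fun k _ => by rw [psupp_pow hC k n hn, smul_zero]

theorem sum_triangle {M : Type*} [AddCommMonoid M] (n : ℕ) (h : ℕ → ℕ → M)
    (h0 : ∀ i j, n < i + j → h i j = 0) :
    ∑ k ∈ Finset.range (n + 1), ∑ ij ∈ Finset.HasAntidiagonal.antidiagonal k, h ij.1 ij.2
      = ∑ i ∈ Finset.range (n + 1), ∑ j ∈ Finset.range (n + 1), h i j := by
  have hdisj : (↑(Finset.range (n + 1)) : Set ℕ).PairwiseDisjoint Finset.HasAntidiagonal.antidiagonal := by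
    intro a _ b _ hab
    simp only [Function.onFun, Finset.disjoint_left]
    intro ij h1 h2
    rw [Finset.HasAntidiagonal.mem_antidiagonal] at h1 h2
    exact hab (h1.symm.trans h2)
  have hbi : (Finset.range (n + 1)).biUnion Finset.HasAntidiagonal.antidiagonal
      = (Finset.range (n + 1) ×ˢ Finset.range (n + 1)).filter (fun ij => ij.1 + ij.2 ≤ n) := by
    ext ij
    simp only [Finset.mem_biUnion, Finset.mem_filter, Finset.mem_product,
      Finset.mem_range, Finset.HasAntidiagonal.mem_antidiagonal]
    constructor
    · rintro ⟨k, hk, rfl⟩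
      omega
    · intro hmem
      exact ⟨ij.1 + ij.2, by omega, rfl⟩
  calc ∑ k ∈ Finset.range (n + 1), ∑ ij ∈ Finset.HasAntidiagonal.antidiagonal k, h ij.1 ij.2
      = ∑ ij ∈ (Finset.range (n + 1) ×ˢ Finset.range (n + 1)).filter
          (fun ij => ij.1 + ij.2 ≤ n), h ij.1 ij.2 := by
        rw [← Finset.sum_biUnion hdisj, hbi]
    _ = ∑ ij ∈ Finset.range (n + 1) ×ˢ Finset.range (n + 1), h ij.1 ij.2 := by
        refine Finset.sum_subset (Finset.filter_subset _ _) fun ij hij hns => ?_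
        simp only [Finset.mem_filter, Finset.mem_product, Finset.mem_range] at hij hns
        exact h0 _ _ (by omega)
    _ = _ := Finset.sum_product _ _ _

theorem psExp_add {A B : PowerSeries R}
    (hA : constantCoeff (R := R) A = 0) (hB : constantCoeff (R := R) B = 0) :
    psExp (A + B) = psExp A * psExp B := by
  ext n
  have key : ∀ i j : ℕ, n < i + j → coeff (R := R) n (A ^ i * B ^ j) = 0 := by
    intro i j hij
    have hd : (X : PowerSeries R) ^ (i + j) ∣ A ^ i * B ^ j := by
      rw [pow_add]
      exact mul_dvd_mul (pow_dvd_pow_of_dvd (X_dvd_iff.2 hA) i)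
        (pow_dvd_pow_of_dvd (X_dvd_iff.2 hB) j)
    exact X_pow_dvd_iff.1 hd n hij
  have lhs_eq : coeff (R := R) n (psExp (A + B))
      = ∑ k ∈ Finset.range (n + 1), ∑ ij ∈ Finset.HasAntidiagonal.antidiagonal k,
          ((ij.1.factorial : ℚ) * ij.2.factorial)⁻¹ • coeff (R := R) n (A ^ ij.1 * B ^ ij.2) := by
    rw [coeff_psExp]
    refine Finset.sum_congr rfl fun k _ => ?_
    rw [Finset.Nat.sum_antidiagonal_eq_sum_range_succ
      (fun i j => ((i.factorial : ℚ) * j.factorial)⁻¹ • coeff (R := R) n (A ^ i * B ^ j))]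
    rw [add_pow, map_sum, Finset.smul_sum]
    refine Finset.sum_congr rfl fun i hi => ?_
    rw [Finset.mem_range] at hi
    have hi' : i ≤ k := by omega
    have hc1 : ((k.choose i : ℕ) : PowerSeries R) = C (R := R) ((k.choose i : ℕ) : R) := by
      rw [map_natCast]
    rw [hc1, coeff_mul_C]
    have hc2 : ((k.choose i : ℕ) : R) = algebraMap ℚ R ((k.choose i : ℕ) : ℚ) := by
      rw [map_natCast]
    rw [hc2, mul_comm, ← Algebra.smul_def, smul_smul]
    congr 1
    rw [Nat.cast_choose ℚ hi', div_eq_mul_inv, ← mul_assoc,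
      inv_mul_cancel₀ (Nat.cast_ne_zero.2 k.factorial_ne_zero), one_mul]
  have rhs_eq : coeff (R := R) n (psExp A * psExp B)
      = ∑ i ∈ Finset.range (n + 1), ∑ j ∈ Finset.range (n + 1),
          ((i.factorial : ℚ) * j.factorial)⁻¹ • coeff (R := R) n (A ^ i * B ^ j) := by
    rw [PowerSeries.coeff_mul]
    have step1 : ∀ ab ∈ Finset.HasAntidiagonal.antidiagonal n,
        coeff (R := R) ab.1 (psExp A) * coeff (R := R) ab.2 (psExp B)
        = ∑ i ∈ Finset.range (n + 1), ∑ j ∈ Finset.range (n + 1),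
            ((i.factorial : ℚ) * j.factorial)⁻¹ •
              (coeff (R := R) ab.1 (A ^ i) * coeff (R := R) ab.2 (B ^ j)) := by
      intro ab hab
      rw [Finset.HasAntidiagonal.mem_antidiagonal] at hab
      have ea : coeff (R := R) ab.1 (psExp A)
          = ∑ i ∈ Finset.range (n + 1), (i.factorial : ℚ)⁻¹ • coeff (R := R) ab.1 (A ^ i) := by
        rw [coeff_psExp]
        refine Finset.sum_subset (Finset.range_subset_range.2 (by omega)) fun i _ hi => ?_
        rw [Finset.mem_range, not_lt] at hi
        rw [coeff_pow_eq_zero hA (by omega), smul_zero]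
      have eb : coeff (R := R) ab.2 (psExp B)
          = ∑ j ∈ Finset.range (n + 1), (j.factorial : ℚ)⁻¹ • coeff (R := R) ab.2 (B ^ j) := by
        rw [coeff_psExp]
        refine Finset.sum_subset (Finset.range_subset_range.2 (by omega)) fun j _ hj => ?_
        rw [Finset.mem_range, not_lt] at hj
        rw [coeff_pow_eq_zero hB (by omega), smul_zero]
      rw [ea, eb, Finset.sum_mul_sum]
      refine Finset.sum_congr rfl fun i _ => Finset.sum_congr rfl fun j _ => ?_
      rw [smul_mul_smul_comm, ← mul_inv]
    rw [Finset.sum_congr rfl step1, Finset.sum_comm]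
    refine Finset.sum_congr rfl fun i _ => ?_
    rw [Finset.sum_comm]
    refine Finset.sum_congr rfl fun j _ => ?_
    rw [← Finset.smul_sum, ← PowerSeries.coeff_mul]
  rw [lhs_eq, rhs_eq]
  exact sum_triangle n
    (fun i j => ((i.factorial : ℚ) * j.factorial)⁻¹ • coeff (R := R) n (A ^ i * B ^ j))
    (fun i j hij => by simp only [key i j hij, smul_zero])

theorem coeff_pow_mem {A : Type*} [CommRing A] [Algebra ℚ A] {B : Subalgebra ℚ A}
    {F : PowerSeries A} (hF : ∀ n, coeff (R := A) n F ∈ B) (k : ℕ) :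
    ∀ n, coeff (R := A) n (F ^ k) ∈ B := by
  induction k with
  | zero =>
    intro n
    rw [pow_zero, coeff_one]
    split
    · exact one_mem B
    · exact zero_mem B
  | succ k ih =>
    intro n
    rw [pow_succ, PowerSeries.coeff_mul]
    exact sum_mem fun ab _ => mul_mem (ih ab.1) (hF ab.2)

theorem coeff_psExp_mem {A : Type*} [CommRing A] [Algebra ℚ A] {B : Subalgebra ℚ A}
    {F : PowerSeries A} (hF : ∀ n, coeff (R := A) n F ∈ B) (n : ℕ) :
    coeff (R := A) n (psExp F) ∈ B := by
  rw [coeff_psExp]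
  exact sum_mem fun k _ => B.smul_mem (coeff_pow_mem hF k n) _

end ExpHelpers

section MemHelpers

variable {A : Type*} [CommRing A] [Algebra ℚ A] {B : Subalgebra ℚ A}

theorem coeff_pow_mem_of_lt {F : PowerSeries A} (hF0 : constantCoeff (R := A) F = 0) :
    ∀ (k n : ℕ), (∀ m, m < n → coeff (R := A) m F ∈ B) → coeff (R := A) n (F ^ (k + 2)) ∈ B := by
  intro k
  induction k with
  | zero =>
    intro n h
    rw [show (0 + 2) = 2 from rfl, pow_two, PowerSeries.coeff_mul]
    refine sum_mem fun ab hab => ?_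
    rw [Finset.HasAntidiagonal.mem_antidiagonal] at hab
    obtain ⟨a, b⟩ := ab
    simp only at hab ⊢
    rcases Nat.eq_zero_or_pos a with ha | ha
    · rw [ha, coeff_zero_eq_constantCoeff_apply, hF0, zero_mul]; exact zero_mem B
    rcases Nat.eq_zero_or_pos b with hb | hb
    · rw [hb, coeff_zero_eq_constantCoeff_apply, hF0, mul_zero]; exact zero_mem B
    exact mul_mem (h a (by omega)) (h b (by omega))
  | succ k ih =>
    intro n h
    rw [show k + 1 + 2 = (k + 2) + 1 from rfl, pow_succ', PowerSeries.coeff_mul]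
    refine sum_mem fun ab hab => ?_
    rw [Finset.HasAntidiagonal.mem_antidiagonal] at hab
    obtain ⟨a, b⟩ := ab
    simp only at hab ⊢
    rcases Nat.eq_zero_or_pos a with ha | ha
    · rw [ha, coeff_zero_eq_constantCoeff_apply, hF0, zero_mul]; exact zero_mem B
    rcases Nat.eq_zero_or_pos b with hb | hb
    · rw [hb, coeff_zero_eq_constantCoeff_apply, map_pow, hF0, zero_pow (by omega), mul_zero]
      exact zero_mem B
    exact mul_mem (h a (by omega)) (ih b (fun m hm => h m (by omega)))

theorem coeff_psExp_mem_partial {F : PowerSeries A} (hF0 : constantCoeff (R := A) F = 0)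
    (n : ℕ) (hlow : ∀ m, m < n → coeff (R := A) m F ∈ B) (hn : coeff (R := A) n F ∈ B) :
    coeff (R := A) n (psExp F) ∈ B := by
  rw [coeff_psExp]
  refine sum_mem fun k _ => ?_
  refine B.smul_mem ?_ _
  match k with
  | 0 =>
    rw [pow_zero, coeff_one]
    split
    · exact one_mem B
    · exact zero_mem B
  | 1 => rw [pow_one]; exact hn
  | (k + 2) => exact coeff_pow_mem_of_lt hF0 k n hlow

end MemHelpers

/-- in `A = ℚ[x₁, x₂, …]` (variables indexed by `ℕ+`), let
`X(t) = 1 + Σ_{n≥1} xₙ tⁿ` and let `C` be the power series with zero constant term such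
that `X = exp C`; set `cₙ = n · (coeff n C)`.  With `U`,`V` the `p`-singular/`p`-regular
parts of `X` and `Y = V·U⁻¹ = Σ yₙ tⁿ`, the `ℚ`-subalgebra of `A` generated by
`{yₙ : n ≥ 1, p ∤ n}` equals the `ℚ`-subalgebra generated by `{cₙ : n ≥ 1, p ∤ n}`. -/
theorem stmt8 (p : ℕ) (hp : p.Prime)
    (X C Y : PowerSeries (MvPolynomial ℕ+ ℚ))
    (hX : X = PowerSeries.mk fun n =>
      if h : 0 < n then MvPolynomial.X (⟨n, h⟩ : ℕ+) else 1)
    (hC0 : PowerSeries.constantCoeff (R := (MvPolynomial ℕ+ ℚ)) C = 0)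
    (hCX : psExp C = X)
    (hY : Y * pSingularPart p X = pRegularPart p X) :
    Algebra.adjoin ℚ
        {a : MvPolynomial ℕ+ ℚ | ∃ n : ℕ, 1 ≤ n ∧ ¬ p ∣ n ∧
          a = PowerSeries.coeff (R := (MvPolynomial ℕ+ ℚ)) n Y} =
      Algebra.adjoin ℚ
        {a : MvPolynomial ℕ+ ℚ | ∃ n : ℕ, 1 ≤ n ∧ ¬ p ∣ n ∧
          a = (n : MvPolynomial ℕ+ ℚ) * PowerSeries.coeff (R := (MvPolynomial ℕ+ ℚ)) n C} := by
  classical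
  set By := Algebra.adjoin ℚ
      {a : MvPolynomial ℕ+ ℚ | ∃ n : ℕ, 1 ≤ n ∧ ¬ p ∣ n ∧
        a = PowerSeries.coeff (R := (MvPolynomial ℕ+ ℚ)) n Y} with hBy
  set Bc := Algebra.adjoin ℚ
      {a : MvPolynomial ℕ+ ℚ | ∃ n : ℕ, 1 ≤ n ∧ ¬ p ∣ n ∧
        a = (n : MvPolynomial ℕ+ ℚ) * PowerSeries.coeff (R := (MvPolynomial ℕ+ ℚ)) n C} with hBc
  set F := pRegularPart p C with hFdef
  set G := pSingularPart p C with hGdef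
  have hcF : ∀ n, coeff (R := (MvPolynomial ℕ+ ℚ)) n F = if p ∣ n then 0 else coeff (R := (MvPolynomial ℕ+ ℚ)) n C := fun n => by
    rw [hFdef]; exact coeff_pReg p n C
  have hFG : F + G = C := pReg_add_pSing p C
  have hF0 : constantCoeff (R := (MvPolynomial ℕ+ ℚ)) F = 0 := by
    rw [← coeff_zero_eq_constantCoeff_apply, hcF 0, if_pos (dvd_zero p)]
  have hG0 : constantCoeff (R := (MvPolynomial ℕ+ ℚ)) G = 0 := by
    rw [← coeff_zero_eq_constantCoeff_apply, hGdef, coeff_pSing, if_pos (dvd_zero p),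
      coeff_zero_eq_constantCoeff_apply, hC0]
  set E := psExp F with hEdef
  set S := psExp G with hSdef
  have hSsupp : ∀ n, ¬ p ∣ n → coeff (R := (MvPolynomial ℕ+ ℚ)) n S = 0 := by
    rw [hSdef]
    exact psupp_psExp (fun n hn => by rw [hGdef, coeff_pSing, if_neg hn])
  have hX' : E * S = X := by
    rw [← hCX, hEdef, hSdef, ← psExp_add hF0 hG0, hFG]
  have hSunit : IsUnit S := by
    rw [PowerSeries.isUnit_iff_constantCoeff, hSdef, constantCoeff_psExp]
    exact isUnit_one
  have key : Y * pSingularPart p E = pRegularPart p E := by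
    have h1 : (Y * pSingularPart p E) * S = pRegularPart p E * S := by
      rw [mul_assoc, ← pSing_mul_psupp hSsupp, ← pReg_mul_psupp hSsupp, hX']
      exact hY
    exact hSunit.mul_right_cancel h1
  -- Direction 1 : coefficients of Y lie in Bc
  have hfBc : ∀ n, coeff (R := (MvPolynomial ℕ+ ℚ)) n F ∈ Bc := by
    intro n
    rw [hcF n]
    by_cases hn : p ∣ n
    · rw [if_pos hn]; exact zero_mem Bc
    · rw [if_neg hn]
      have hn1 : 1 ≤ n := Nat.one_le_iff_ne_zero.2 (fun h => hn (h ▸ dvd_zero p))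
      have hgen : ((n : MvPolynomial ℕ+ ℚ) * coeff (R := (MvPolynomial ℕ+ ℚ)) n C) ∈ Bc := Algebra.subset_adjoin ⟨n, hn1, hn, rfl⟩
      have hsm := Bc.smul_mem hgen ((n : ℚ)⁻¹)
      have hnn : ((n : ℚ)) ≠ 0 := Nat.cast_ne_zero.2 (by omega)
      have heq : ((n : ℚ)⁻¹ • ((n : MvPolynomial ℕ+ ℚ) * coeff (R := (MvPolynomial ℕ+ ℚ)) n C)) = coeff (R := (MvPolynomial ℕ+ ℚ)) n C := by
        calc (n : ℚ)⁻¹ • ((n : MvPolynomial ℕ+ ℚ) * coeff (R := (MvPolynomial ℕ+ ℚ)) n C)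
            = (n : ℚ)⁻¹ • ((algebraMap ℚ (MvPolynomial ℕ+ ℚ) (n : ℚ)) * coeff (R := (MvPolynomial ℕ+ ℚ)) n C) := by rw [map_natCast]
          _ = (algebraMap ℚ (MvPolynomial ℕ+ ℚ) ((n : ℚ)⁻¹)) * ((algebraMap ℚ (MvPolynomial ℕ+ ℚ) (n : ℚ)) * coeff (R := (MvPolynomial ℕ+ ℚ)) n C) := by
              rw [Algebra.smul_def]
          _ = (algebraMap ℚ (MvPolynomial ℕ+ ℚ) ((n : ℚ)⁻¹ * n)) * coeff (R := (MvPolynomial ℕ+ ℚ)) n C := by rw [← mul_assoc, ← map_mul]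
          _ = coeff (R := (MvPolynomial ℕ+ ℚ)) n C := by rw [inv_mul_cancel₀ hnn, map_one, one_mul]
      rwa [heq] at hsm
  have hEBc : ∀ n, coeff (R := (MvPolynomial ℕ+ ℚ)) n E ∈ Bc := by
    rw [hEdef]; exact fun n => coeff_psExp_mem hfBc n
  have hYBc : ∀ n, coeff (R := (MvPolynomial ℕ+ ℚ)) n Y ∈ Bc := by
    intro n
    induction n using Nat.strong_induction_on with
    | _ n IH =>
    have hcoeff := congrArg (coeff (R := (MvPolynomial ℕ+ ℚ)) n) key
    rw [PowerSeries.coeff_mul] at hcoeff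
    have hmem : ((n, 0) : ℕ × ℕ) ∈ Finset.HasAntidiagonal.antidiagonal n := by
      simp
    have hsplit := Finset.add_sum_erase (Finset.HasAntidiagonal.antidiagonal n)
      (fun ab => coeff (R := (MvPolynomial ℕ+ ℚ)) ab.1 Y * coeff (R := (MvPolynomial ℕ+ ℚ)) ab.2 (pSingularPart p E)) hmem
    have h0 : coeff (R := (MvPolynomial ℕ+ ℚ)) 0 (pSingularPart p E) = 1 := by
      rw [coeff_pSing, if_pos (dvd_zero p), coeff_zero_eq_constantCoeff_apply, hEdef,
        constantCoeff_psExp]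
    have hyn : coeff (R := (MvPolynomial ℕ+ ℚ)) n Y = coeff (R := (MvPolynomial ℕ+ ℚ)) n (pRegularPart p E)
        - ∑ ab ∈ (Finset.HasAntidiagonal.antidiagonal n).erase (n, 0),
            coeff (R := (MvPolynomial ℕ+ ℚ)) ab.1 Y * coeff (R := (MvPolynomial ℕ+ ℚ)) ab.2 (pSingularPart p E) := by
      rw [← hcoeff, ← hsplit]
      simp [h0]
    rw [hyn]
    refine sub_mem ?_ (sum_mem fun ab hab => ?_)
    · rw [coeff_pReg]
      split
      · exact zero_mem Bc
      · exact hEBc n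
    · rw [Finset.mem_erase, Finset.HasAntidiagonal.mem_antidiagonal] at hab
      obtain ⟨a, b⟩ := ab
      obtain ⟨hne, hsum⟩ := hab
      simp only at hsum ⊢
      have ha : a < n := by
        by_contra h
        have h1 : a = n := by omega
        have h2 : b = 0 := by omega
        exact hne (by rw [h1, h2])
      refine mul_mem (IH a ha) ?_
      rw [coeff_pSing]
      split
      · exact hEBc b
      · exact zero_mem Bc
  -- Direction 2 : coefficients of F lie in By
  have hfBy : ∀ n, coeff (R := (MvPolynomial ℕ+ ℚ)) n F ∈ By := by
    intro n
    induction n using Nat.strong_induction_on with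
    | _ n IH =>
    by_cases hpn : p ∣ n
    · rw [hcF n, if_pos hpn]; exact zero_mem By
    · have hn1 : 1 ≤ n := by
        by_contra h
        exact hpn (by rw [(by omega : n = 0)]; exact dvd_zero p)
      have heB : ∀ b, b < n → p ∣ b → coeff (R := (MvPolynomial ℕ+ ℚ)) b E ∈ By := by
        intro b hb hpb
        rw [hEdef]
        refine coeff_psExp_mem_partial hF0 b (fun m hm => IH m (lt_trans hm hb)) ?_
        rw [hcF b, if_pos hpb]; exact zero_mem By
      have heN : coeff (R := (MvPolynomial ℕ+ ℚ)) n E ∈ By := by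
        have hcoeff := congrArg (coeff (R := (MvPolynomial ℕ+ ℚ)) n) key
        rw [PowerSeries.coeff_mul] at hcoeff
        have hreg : coeff (R := (MvPolynomial ℕ+ ℚ)) n (pRegularPart p E) = coeff (R := (MvPolynomial ℕ+ ℚ)) n E := by
          rw [coeff_pReg, if_neg hpn]
        rw [hreg] at hcoeff
        rw [← hcoeff]
        refine sum_mem fun ab hab => ?_
        rw [Finset.HasAntidiagonal.mem_antidiagonal] at hab
        obtain ⟨a, b⟩ := ab
        simp only at hab ⊢
        by_cases hpb : p ∣ b
        · have hbn : b < n := by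
            rcases eq_or_lt_of_le (show b ≤ n by omega) with h | h
            · exact absurd (h ▸ hpb) hpn
            · exact h
          have hpa : ¬ p ∣ a := fun h => hpn (by rw [← hab]; exact dvd_add h hpb)
          have ha1 : 1 ≤ a := by
            by_contra h
            exact hpa (by rw [show a = 0 by omega]; exact dvd_zero p)
          refine mul_mem (Algebra.subset_adjoin ⟨a, ha1, hpa, rfl⟩) ?_
          have hsing : coeff (R := (MvPolynomial ℕ+ ℚ)) b (pSingularPart p E) = coeff (R := (MvPolynomial ℕ+ ℚ)) b E := by
            rw [coeff_pSing, if_pos hpb]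
          rw [hsing]
          exact heB b hbn hpb
        · have hsing : coeff (R := (MvPolynomial ℕ+ ℚ)) b (pSingularPart p E) = 0 := by
            rw [coeff_pSing, if_neg hpb]
          rw [hsing, mul_zero]
          exact zero_mem By
      obtain ⟨m, rfl⟩ : ∃ m, n = m + 1 := ⟨n - 1, by omega⟩
      have hexp : coeff (R := (MvPolynomial ℕ+ ℚ)) (m + 1) E = coeff (R := (MvPolynomial ℕ+ ℚ)) (m + 1) F +
          ∑ k ∈ Finset.range m, (((k + 2).factorial : ℚ))⁻¹ • coeff (R := (MvPolynomial ℕ+ ℚ)) (m + 1) (F ^ (k + 2)) := by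
        rw [hEdef, coeff_psExp, Finset.sum_range_succ', Finset.sum_range_succ']
        norm_num [coeff_one]
        exact add_comm _ _
      have hfn : coeff (R := (MvPolynomial ℕ+ ℚ)) (m + 1) F = coeff (R := (MvPolynomial ℕ+ ℚ)) (m + 1) E -
          ∑ k ∈ Finset.range m, (((k + 2).factorial : ℚ))⁻¹ • coeff (R := (MvPolynomial ℕ+ ℚ)) (m + 1) (F ^ (k + 2)) := by
        rw [hexp, add_sub_cancel_right]
      rw [hfn]
      refine sub_mem heN (sum_mem fun k _ => ?_)
      exact By.smul_mem (coeff_pow_mem_of_lt hF0 k (m + 1) (fun r hr => IH r hr)) _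
  -- conclusion
  refine le_antisymm (Algebra.adjoin_le ?_) (Algebra.adjoin_le ?_)
  · rintro a ⟨n, hn1, hnp, rfl⟩
    exact hYBc n
  · rintro a ⟨n, hn1, hnp, rfl⟩
    have hcc : coeff (R := (MvPolynomial ℕ+ ℚ)) n C = coeff (R := (MvPolynomial ℕ+ ℚ)) n F := by rw [hcF n, if_neg hnp]
    rw [hcc]
    exact mul_mem (Subalgebra.natCast_mem By n) (hfBy n)
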